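/- Let D ⊆ ℤ^m be a finite set with D ⊆ B^{L∞}(R) (all vectors have L∞-norm at most R), and let y ∈ ⟨D⟩ (the subgroup of ℤ^m generated by D). Then there exists a finite sequence x₁,…,x_N of elements of D ∪ (−D) such that y = Σ_{j=1}^N x_j, and for every 0 ≤ k ≤ N, ‖Σ_{j=1}^k x_j − (k/N)·y‖_∞ ≤ 2·|D|·R. -/

import Mathlib

/-- The `L∞` norm of an integer vector, as a natural number. -/
def normInf {m : ℕ} (v : Fin m → ℤ) : ℕ :=
  Finset.univ.sup fun i => (v i).natAbs

section Core

variable {ι : Type*} [Fintype ι] [DecidableEq ι]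

/-- D'Hondt invariant: every awarded quotient is at least every pending quotient. -/
def DInv (a n : ι → ℕ) : Prop := ∀ i j, 1 ≤ n i → a j * n i ≤ a i * (n j + 1)

lemma sum_count_eq (l : List ι) : ∑ i : ι, l.count i = l.length := by
  induction l with
  | nil => simp
  | cons x l ih =>
    simp only [List.count_cons, Finset.sum_add_distrib, ih, List.length_cons]
    simp [Finset.sum_ite_eq']

lemma quota_of_inv {a n : ι → ℕ} (hN : 0 < ∑ i, a i) (hInv : DInv a n) {k : ℕ}
    (hsum : ∑ i, n i = k) (i : ι) : k * a i < (∑ i, a i) * (n i + 1) := by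
  by_contra h
  push_neg at h
  have hai : 0 < a i := by
    rcases Nat.eq_zero_or_pos (a i) with h0 | h0
    · exfalso
      rw [h0, Nat.mul_zero, Nat.le_zero, Nat.mul_eq_zero] at h
      omega
    · exact h0
  have key : ∀ j, (∑ i, a i) * n j ≤ k * a j := by
    intro j
    rcases Nat.eq_zero_or_pos (n j) with h0 | h0
    · simp [h0]
    · have h1 : a i * n j ≤ a j * (n i + 1) := hInv j i h0
      have h2 : a i * ((∑ i, a i) * n j) ≤ a i * (k * a j) := by
        calc a i * ((∑ i, a i) * n j) = (∑ i, a i) * (a i * n j) := by ring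
          _ ≤ (∑ i, a i) * (a j * (n i + 1)) := Nat.mul_le_mul_left _ h1
          _ = a j * ((∑ i, a i) * (n i + 1)) := by ring
          _ ≤ a j * (k * a i) := Nat.mul_le_mul_left _ h
          _ = a i * (k * a j) := by ring
      exact Nat.le_of_mul_le_mul_left h2 hai
  have hstrict : ∑ j : ι, (∑ i, a i) * n j < ∑ j : ι, k * a j := by
    apply Finset.sum_lt_sum (fun j _ => key j)
    refine ⟨i, Finset.mem_univ i, ?_⟩
    have : (∑ i, a i) * n i + (∑ i, a i) ≤ k * a i := by
      calc (∑ i, a i) * n i + (∑ i, a i) = (∑ i, a i) * (n i + 1) := by ring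
        _ ≤ k * a i := h
    omega
  rw [← Finset.mul_sum, ← Finset.mul_sum, hsum, Nat.mul_comm] at hstrict
  exact lt_irrefl _ hstrict

lemma inv_step {a n : ι → ℕ} (hInv : DInv a n) (i₀ : ι)
    (hmax : ∀ j, a j * (n i₀ + 1) ≤ a i₀ * (n j + 1)) :
    DInv a (fun i => n i + if i = i₀ then 1 else 0) := by
  intro i j hi
  rcases eq_or_ne i i₀ with hii | hii <;> rcases eq_or_ne j i₀ with hjj | hjj
  · simp only [hii, hjj, if_pos rfl] at hi ⊢
    exact Nat.mul_le_mul (le_refl _) (by omega)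
  · simp only [hii, if_pos rfl, if_neg hjj, add_zero] at hi ⊢
    exact hmax j
  · simp only [hjj, if_neg hii, if_pos rfl, add_zero] at hi ⊢
    exact le_trans (hInv i i₀ hi) (Nat.mul_le_mul (le_refl _) (by omega))
  · simp only [if_neg hii, if_neg hjj, add_zero] at hi ⊢
    exact hInv i j hi

lemma core (a : ι → ℕ) (hN : 0 < ∑ i, a i) :
    ∀ k, k ≤ ∑ i, a i → ∃ l : List ι, l.length = k ∧ DInv a (fun i => l.count i) ∧
      ∀ j ≤ k, ∀ i, j * a i < (∑ i, a i) * ((l.take j).count i + 1) := by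
  intro k
  induction k with
  | zero =>
    intro _
    refine ⟨[], rfl, fun i j hi => by simp at hi, ?_⟩
    intro j hj i
    interval_cases j
    simp only [Nat.zero_mul]
    exact Nat.mul_pos hN (Nat.succ_pos _)
  | succ k ih =>
    intro hk1
    obtain ⟨l, hlen, hInv, hquota⟩ := ih (by omega)
    have hne : Nonempty ι := by
      by_contra h
      rw [not_nonempty_iff] at h
      rw [Finset.univ_eq_empty, Finset.sum_empty] at hN
      omega
    obtain ⟨i₀, -, hmax⟩ := Finset.exists_max_image Finset.univ
      (fun i => (a i : ℚ) / ((l.count i : ℚ) + 1)) Finset.univ_nonempty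
    have hmax' : ∀ j, a j * (l.count i₀ + 1) ≤ a i₀ * (l.count j + 1) := by
      intro j
      have := hmax j (Finset.mem_univ j)
      rw [div_le_div_iff₀ (by positivity) (by positivity)] at this
      exact_mod_cast this
    have hcount : (fun i => (l ++ [i₀]).count i)
        = fun i => l.count i + if i = i₀ then 1 else 0 := by
      funext i
      by_cases h : i = i₀
      · subst h; simp [List.count_append]
      · simp [List.count_append, h, Ne.symm h]
    refine ⟨l ++ [i₀], by simp [List.length_append, hlen], ?_, ?_⟩
    · rw [hcount]; exact inv_step hInv i₀ hmax'
    · intro j hj i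
      rcases Nat.lt_or_ge j (k + 1) with h | h
      · rw [List.take_append_of_le_length (by omega)]
        exact hquota j (by omega) i
      · have hjk : j = k + 1 := le_antisymm hj h
        subst hjk
        rw [List.take_of_length_le (by simp [hlen])]
        have hsum : ∑ i : ι, (l ++ [i₀]).count i = k + 1 := by
          rw [sum_count_eq]; simp [hlen]
        exact quota_of_inv hN (by rw [hcount]; exact inv_step hInv i₀ hmax') hsum i

lemma map_sum_count {M : Type*} [AddCommMonoid M] (w : ι → M) (l : List ι) :
    (l.map w).sum = ∑ i : ι, (l.count i) • w i := by
  induction l with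
  | nil => simp
  | cons x l ih =>
    simp only [List.map_cons, List.sum_cons, ih]
    have hcc : ∀ i : ι, List.count i (x :: l) = List.count i l + if i = x then 1 else 0 := by
      intro i
      by_cases h : i = x
      · subst h; simp [List.count_cons]
      · simp [List.count_cons, h, Ne.symm h]
    have h2 : ∑ i : ι, (if i = x then 1 else 0) • w i = w x := by
      simp [ite_smul, Finset.sum_ite_eq']
    have h3 : (∑ i : ι, List.count i (x :: l) • w i)
        = (∑ i : ι, List.count i l • w i) + ∑ i : ι, (if i = x then 1 else 0) • w i := by
      rw [← Finset.sum_add_distrib]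
      exact Finset.sum_congr rfl fun i _ => by rw [hcc i, add_smul]
    rw [h3, h2]
    exact add_comm _ _

end Core

theorem stmt4 {m : ℕ} (R : ℕ) (D : Finset (Fin m → ℤ))
    (hD : ∀ v ∈ D, normInf v ≤ R)
    (y : Fin m → ℤ) (hy : y ∈ AddSubgroup.closure (D : Set (Fin m → ℤ))) :
    ∃ l : List (Fin m → ℤ),
      (∀ x ∈ l, x ∈ D ∨ -x ∈ D) ∧ l.sum = y ∧
      ∀ k ≤ l.length, ∀ i : Fin m,
        |(((l.take k).sum) i : ℝ) - ((k : ℝ) / (l.length : ℝ)) * (y i : ℝ)|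
          ≤ 2 * D.card * R := by
  classical
  have hy' : y ∈ Submodule.span ℤ (D : Set (Fin m → ℤ)) := by
    rw [← Submodule.span_int_eq_addSubgroupClosure] at hy
    exact hy
  obtain ⟨c, -, hc⟩ := Submodule.mem_span_finset.mp hy'
  set ι := {x : Fin m → ℤ // x ∈ D} with hι
  letI : BEq ι := instBEqOfDecidableEq
  set a : ι → ℕ := fun i => (c i).natAbs with ha
  set w : ι → (Fin m → ℤ) :=
    fun i => if 0 ≤ c i then (i : Fin m → ℤ) else -(i : Fin m → ℤ) with hw
  have hw_mem : ∀ i : ι, w i ∈ D ∨ -(w i) ∈ D := by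
    intro i
    by_cases h : 0 ≤ c i
    · left; simp [hw, h, i.2]
    · right; simp [hw, h, i.2]
  have hw_smul : ∀ i : ι, (a i : ℤ) • w i = c i • (i : Fin m → ℤ) := by
    intro i
    by_cases h : 0 ≤ c i
    · simp [hw, ha, h, Int.natAbs_of_nonneg h]
    · push_neg at h
      rw [hw, ha]
      simp only [if_neg (not_le.mpr h)]
      rw [smul_neg, ← neg_smul]
      congr 1
      omega
  have hw_R : ∀ (i : ι) (t : Fin m), |(w i t : ℤ)| ≤ (R : ℤ) := by
    intro i t
    have h1 : ((i : Fin m → ℤ) t).natAbs ≤ normInf (i : Fin m → ℤ) := by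
      unfold normInf
      exact Finset.le_sup (f := fun s => ((i : Fin m → ℤ) s).natAbs) (Finset.mem_univ t)
    have h2 : normInf (i : Fin m → ℤ) ≤ R := hD _ i.2
    have h3 : |((i : Fin m → ℤ) t)| ≤ (R : ℤ) := by
      rw [Int.abs_eq_natAbs]; exact_mod_cast le_trans h1 h2
    by_cases h : 0 ≤ c i
    · simpa [hw, h] using h3
    · simp only [hw, if_neg h]
      simpa using h3
  have hy_eq : y = ∑ i : ι, (a i : ℤ) • w i := by
    rw [← hc, ← Finset.sum_attach D (fun v => c v • v), Finset.univ_eq_attach]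
    exact (Finset.sum_congr rfl fun i _ => hw_smul i).symm
  set N := ∑ i : ι, a i with hNdef
  by_cases hN : N = 0
  · have hsum0 : ∑ i : ι, a i = 0 := by rw [← hNdef]; exact hN
    have hy0 : y = 0 := by
      rw [hy_eq]
      apply Finset.sum_eq_zero
      intro i _
      have hz : a i = 0 := Finset.sum_eq_zero_iff.mp hsum0 i (Finset.mem_univ i)
      simp [hz]
    refine ⟨[], by simp, by simp [hy0], ?_⟩
    intro k hk i
    simp only [List.length_nil, Nat.le_zero] at hk
    subst hk
    simp only [List.take_nil, List.sum_nil, hy0, Pi.zero_apply, Int.cast_zero,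
      Nat.cast_zero, mul_zero, sub_zero, abs_zero]
    positivity
  · have hNpos : 0 < N := Nat.pos_of_ne_zero hN
    obtain ⟨l, hlen, hInv, hquota⟩ := core a hNpos N le_rfl
    have hcount_full : ∀ i, l.count i = a i := by
      have hle : ∀ i : ι, a i ≤ l.count i := by
        intro i
        have := hquota N le_rfl i
        rw [List.take_of_length_le (le_of_eq hlen)] at this
        exact Nat.lt_succ_iff.mp (lt_of_mul_lt_mul_left this (Nat.zero_le N))
      have hsums : ∑ i : ι, a i = ∑ i : ι, l.count i := by
        rw [sum_count_eq, hlen]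
      intro i
      exact ((Finset.sum_eq_sum_iff_of_le (fun i _ => hle i)).mp hsums i
        (Finset.mem_univ i)).symm
    set L := l.map w with hL
    have hLlen : L.length = N := by simp [hL, hlen]
    have hLsum : L.sum = y := by
      rw [hL, map_sum_count, hy_eq]
      exact Finset.sum_congr rfl fun i _ => by
        rw [hcount_full i, natCast_zsmul]
    refine ⟨L, ?_, hLsum, ?_⟩
    · intro x hx
      obtain ⟨i, -, rfl⟩ := List.mem_map.mp hx
      exact hw_mem i
    · intro k hk t
      rw [hLlen] at hk
      set n : ι → ℕ := fun i => (l.take k).count i with hn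
      have hsum_n : ∑ i : ι, n i = k := by
        rw [hn, sum_count_eq, List.length_take, hlen, min_eq_left hk]
      have hq : ∀ i, k * a i < N * (n i + 1) := fun i => hquota k hk i
      have htake : L.take k = (l.take k).map w := by rw [hL, List.map_take]
      have hS : (((L.take k).sum) t : ℝ) = ∑ i : ι, (n i : ℝ) * (w i t : ℝ) := by
        rw [htake, map_sum_count, Finset.sum_apply]
        simp only [Pi.smul_apply, nsmul_eq_mul]
        push_cast
        rfl
      have hyt : ((y t : ℤ) : ℝ) = ∑ i : ι, (a i : ℝ) * (w i t : ℝ) := by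
        rw [hy_eq, Finset.sum_apply]
        simp only [Pi.smul_apply, smul_eq_mul]
        push_cast
        rfl
      rw [hLlen, hS, hyt]
      have hNR : (0 : ℝ) < N := by exact_mod_cast hNpos
      have hRpos : (0 : ℝ) ≤ R := Nat.cast_nonneg R
      have hterm : ∀ i : ι,
          |(n i : ℝ) * (w i t : ℝ) - (k : ℝ) * (a i : ℝ) / N * (w i t : ℝ)|
            ≤ ((n i : ℝ) - (k : ℝ) * (a i : ℝ) / N + 2) * R := by
        intro i
        set e : ℝ := (n i : ℝ) - (k : ℝ) * (a i : ℝ) / N with he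
        have he1 : -1 < e := by
          have hcast : (k : ℝ) * (a i : ℝ) < N * ((n i : ℝ) + 1) := by
            exact_mod_cast hq i
          have hdiv : (k : ℝ) * (a i : ℝ) / N < (n i : ℝ) + 1 := by
            rw [div_lt_iff₀ hNR]
            calc (k : ℝ) * (a i : ℝ) < N * ((n i : ℝ) + 1) := hcast
              _ = ((n i : ℝ) + 1) * N := mul_comm _ _
          rw [he]
          linarith
        have habs : |e| ≤ e + 2 := by
          rcases abs_cases e with ⟨h1, h2⟩ | ⟨h1, h2⟩ <;> nlinarith
        have hwt : |(w i t : ℝ)| ≤ (R : ℝ) := by exact_mod_cast hw_R i t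
        calc |(n i : ℝ) * (w i t : ℝ) - (k : ℝ) * (a i : ℝ) / N * (w i t : ℝ)|
            = |e * (w i t : ℝ)| := by rw [he]; ring_nf
          _ = |e| * |(w i t : ℝ)| := abs_mul _ _
          _ ≤ (e + 2) * R := by
              have h0 : (0:ℝ) ≤ |e| := abs_nonneg e
              have h0' : (0:ℝ) ≤ |(w i t : ℝ)| := abs_nonneg _
              nlinarith
      have hsum_e : ∑ i : ι, ((n i : ℝ) - (k : ℝ) * (a i : ℝ) / N + 2)
          = 2 * (D.card : ℝ) := by
        rw [Finset.sum_add_distrib, Finset.sum_sub_distrib]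
        have h1 : ∑ i : ι, (n i : ℝ) = k := by exact_mod_cast hsum_n
        have h2 : ∑ i : ι, (k : ℝ) * (a i : ℝ) / N = k := by
          rw [← Finset.sum_div, ← Finset.mul_sum]
          have : ∑ i : ι, (a i : ℝ) = N := by exact_mod_cast rfl
          rw [this]
          field_simp
        rw [h1, h2]
        simp [Finset.card_univ, Fintype.card_coe]
        rw [show (Fintype.card ι) = D.card from Fintype.card_coe D]
        ring
      calc |∑ i : ι, (n i : ℝ) * (w i t : ℝ)
              - (k : ℝ) / N * ∑ i : ι, (a i : ℝ) * (w i t : ℝ)|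
          = |∑ i : ι, ((n i : ℝ) * (w i t : ℝ)
              - (k : ℝ) * (a i : ℝ) / N * (w i t : ℝ))| := by
            rw [Finset.sum_sub_distrib, Finset.mul_sum]
            congr 2
            exact Finset.sum_congr rfl fun i _ => by ring
        _ ≤ ∑ i : ι, |(n i : ℝ) * (w i t : ℝ)
              - (k : ℝ) * (a i : ℝ) / N * (w i t : ℝ)| :=
            Finset.abs_sum_le_sum_abs _ _
        _ ≤ ∑ i : ι, ((n i : ℝ) - (k : ℝ) * (a i : ℝ) / N + 2) * R :=
            Finset.sum_le_sum fun i _ => hterm i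
        _ = 2 * D.card * R := by rw [← Finset.sum_mul, hsum_e]
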